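/- Let r : g → h and s : h → ℓ be composable morphisms of a graded commutative 2-ring R such that the composite s ∘ r is an isomorphism. Then both r and s are isomorphisms. Equivalently, in a graded commutative 2-ring any composite (on the right or on the left) of a non-invertible morphism is again non-invertible. -/

import Mathlib

open CategoryTheory CategoryTheory.Limits CategoryTheory.MonoidalCategory

universe w v u v' u' v'' u''

/-- A *graded commutative 2-ring*: an essentially small preadditive symmetric monoidal
category whose tensor product is additive in each variable and in which every object
is invertible for the tensor product. -/
class GradedComm2Ring (C : Type u) [Category.{v} C] [Preadditive C] [MonoidalCategory C]
    [SymmetricCategory C] [MonoidalPreadditive C] : Prop where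
  essentiallySmall : EssentiallySmall.{v} C
  invertible : ∀ g : C, ∃ g' : C, Nonempty (g ⊗ g' ≅ 𝟙_ C)

section Aux

variable {C : Type*} [Category C] [MonoidalCategory C]

/-- Whiskering on the right by an invertible object is injective. -/
lemma whiskerRight_cancel' {y z : C} (j : y ⊗ z ≅ 𝟙_ C) {A B : C} {f f' : A ⟶ B}
    (hyp : f ▷ y = f' ▷ y) : f = f' := by
  have h3 : f ▷ (y ⊗ z) = f' ▷ (y ⊗ z) := by
    have n1 := associator_naturality_left f y z
    have n2 := associator_naturality_left f' y z
    calc f ▷ (y ⊗ z) = (α_ A y z).inv ≫ f ▷ y ▷ z ≫ (α_ B y z).hom := by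
          rw [n1]; simp
      _ = (α_ A y z).inv ≫ f' ▷ y ▷ z ≫ (α_ B y z).hom := by rw [hyp]
      _ = f' ▷ (y ⊗ z) := by rw [n2]; simp
  have h4 : f ▷ (𝟙_ C) = f' ▷ (𝟙_ C) := by
    have e1 := whisker_exchange f j.hom
    have e2 := whisker_exchange f' j.hom
    calc f ▷ 𝟙_ C = (A ◁ j.inv) ≫ (A ◁ j.hom) ≫ f ▷ 𝟙_ C := by simp
      _ = (A ◁ j.inv) ≫ f ▷ (y ⊗ z) ≫ (B ◁ j.hom) := by rw [← e1]
      _ = (A ◁ j.inv) ≫ f' ▷ (y ⊗ z) ≫ (B ◁ j.hom) := by rw [h3]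
      _ = (A ◁ j.inv) ≫ (A ◁ j.hom) ≫ f' ▷ 𝟙_ C := by rw [e2]
      _ = f' ▷ 𝟙_ C := by simp
  rw [MonoidalCategory.whiskerRight_id, MonoidalCategory.whiskerRight_id] at h4
  simpa using h4

/-- Scalars (endomorphisms of the unit) are central. -/
lemma scalar_central {Z : C} (m : Z ⟶ 𝟙_ C) (σ : 𝟙_ C ⟶ 𝟙_ C) :
    m ≫ σ = (λ_ Z).inv ≫ σ ▷ Z ≫ (λ_ Z).hom ≫ m := by
  have h1 : σ ▷ Z ≫ (𝟙_ C ◁ m) = (𝟙_ C ◁ m) ≫ σ ▷ 𝟙_ C := (whisker_exchange σ m).symm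
  have h2 : (𝟙_ C) ◁ m ≫ (λ_ (𝟙_ C)).hom = (λ_ Z).hom ≫ m := leftUnitor_naturality m
  have h3 : σ ▷ (𝟙_ C) ≫ (ρ_ (𝟙_ C)).hom = (ρ_ (𝟙_ C)).hom ≫ σ := rightUnitor_naturality σ
  have key : σ ▷ Z ≫ (λ_ Z).hom ≫ m = (λ_ Z).hom ≫ m ≫ σ := by
    rw [← h2]
    calc σ ▷ Z ≫ (𝟙_ C ◁ m) ≫ (λ_ (𝟙_ C)).hom
        = ((𝟙_ C ◁ m) ≫ σ ▷ 𝟙_ C) ≫ (λ_ (𝟙_ C)).hom := by rw [← h1]; simp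
      _ = (𝟙_ C ◁ m) ≫ σ ▷ 𝟙_ C ≫ (ρ_ (𝟙_ C)).hom := by rw [unitors_equal]; simp
      _ = (𝟙_ C ◁ m) ≫ (ρ_ (𝟙_ C)).hom ≫ σ := by rw [h3]
      _ = ((𝟙_ C ◁ m) ≫ (λ_ (𝟙_ C)).hom) ≫ σ := by rw [unitors_equal]; simp
      _ = (λ_ Z).hom ≫ m ≫ σ := by rw [h2]; simp
  rw [key]; simp

/-- For `h` invertible, postcomposition with `f : h ⟶ h` acts on `Hom(g, h)` by the
scalar `σ = ι.inv ≫ f ▷ h' ≫ ι.hom`. -/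
lemma comp_eq_scalar {h h' : C} (ι : h ⊗ h' ≅ 𝟙_ C) (j : h' ⊗ h ≅ 𝟙_ C)
    {g : C} (f : h ⟶ h) (a : g ⟶ h) :
    a ≫ f = (λ_ g).inv ≫ (ι.inv ≫ f ▷ h' ≫ ι.hom) ▷ g ≫ (λ_ g).hom ≫ a := by
  set σ : 𝟙_ C ⟶ 𝟙_ C := ι.inv ≫ f ▷ h' ≫ ι.hom with hσ
  apply whiskerRight_cancel' j
  apply (cancel_mono ι.hom).1
  have hm : (a ≫ f) ▷ h' ≫ ι.hom = (a ▷ h' ≫ ι.hom) ≫ σ := by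
    rw [hσ]; simp [comp_whiskerRight]
  have hc := scalar_central (a ▷ h' ≫ ι.hom) σ
  have coh : ((λ_ g).inv ≫ σ ▷ g ≫ (λ_ g).hom) ▷ h' =
      (λ_ (g ⊗ h')).inv ≫ σ ▷ (g ⊗ h') ≫ (λ_ (g ⊗ h')).hom := by
    simp only [comp_whiskerRight, leftUnitor_tensor_inv, leftUnitor_tensor_hom,
      Category.assoc]
    rw [← associator_naturality_left_assoc]
    simp
  calc (a ≫ f) ▷ h' ≫ ι.hom
      = (a ▷ h' ≫ ι.hom) ≫ σ := hm
    _ = (λ_ (g ⊗ h')).inv ≫ σ ▷ (g ⊗ h') ≫ (λ_ (g ⊗ h')).hom ≫ (a ▷ h' ≫ ι.hom) := by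
        exact hc
    _ = (((λ_ g).inv ≫ σ ▷ g ≫ (λ_ g).hom) ▷ h') ≫ (a ▷ h' ≫ ι.hom) := by
        rw [coh]; simp
    _ = ((λ_ g).inv ≫ σ ▷ g ≫ (λ_ g).hom ≫ a) ▷ h' ≫ ι.hom := by
        simp only [comp_whiskerRight, Category.assoc]


/-- In a graded commutative 2-ring, every split monomorphism is an isomorphism. -/
lemma isIso_of_retraction {C : Type u} [Category.{v} C] [Preadditive C] [MonoidalCategory C]
    [SymmetricCategory C] [MonoidalPreadditive C] [GradedComm2Ring C]
    {g h : C} (r : g ⟶ h) (u : h ⟶ g) (hu : r ≫ u = 𝟙 g) : IsIso r := by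
  obtain ⟨h', ⟨ι⟩⟩ := GradedComm2Ring.invertible (C := C) h
  obtain ⟨g', ⟨ιg⟩⟩ := GradedComm2Ring.invertible (C := C) g
  have j : h' ⊗ h ≅ 𝟙_ C := (β_ h' h).trans ι
  set σ : 𝟙_ C ⟶ 𝟙_ C := ι.inv ≫ (u ≫ r) ▷ h' ≫ ι.hom with hσdef
  have L2 := comp_eq_scalar ι j (u ≫ r) r
  have hr : r ≫ u ≫ r = r := by rw [← Category.assoc, hu, Category.id_comp]
  rw [hr, ← hσdef] at L2
  have L2' := reassoc_of% L2
  have h5 : r ≫ u = (λ_ g).inv ≫ σ ▷ g ≫ (λ_ g).hom ≫ r ≫ u := L2' u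
  rw [hu] at h5
  have hw : (λ_ g).inv ≫ σ ▷ g ≫ (λ_ g).hom = 𝟙 g := by
    rw [Category.comp_id] at h5; exact h5.symm
  have h6 : σ ▷ g = 𝟙 (𝟙_ C ⊗ g) := by
    have := congrArg (fun t => (λ_ g).hom ≫ t ≫ (λ_ g).inv) hw
    simpa using this
  have hσ1 : σ = 𝟙 (𝟙_ C) := by
    apply whiskerRight_cancel' ιg
    rw [h6, MonoidalCategory.id_whiskerRight]
  rw [hσdef] at hσ1
  have h7 : (u ≫ r) ▷ h' = 𝟙 (h ⊗ h') := by
    have := congrArg (fun t => ι.hom ≫ t ≫ ι.inv) hσ1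
    simpa using this
  have h8 : u ≫ r = 𝟙 h := by
    apply whiskerRight_cancel' j
    rw [h7, MonoidalCategory.id_whiskerRight]
  exact ⟨⟨u, hu, h8⟩⟩

end Aux

/-- In a graded commutative 2-ring, if a composite `s ∘ r` is an
isomorphism then both `r` and `s` are isomorphisms; equivalently, any composite (on
either side) of a non-invertible morphism is again non-invertible. -/
theorem isIso_of_isIso_comp
    {C : Type u} [Category.{v} C] [Preadditive C] [MonoidalCategory C]
    [SymmetricCategory C] [MonoidalPreadditive C] [GradedComm2Ring C]
    {g h l : C} (r : g ⟶ h) (s : h ⟶ l) (hrs : IsIso (r ≫ s)) :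
    IsIso r ∧ IsIso s := by
  haveI hr : IsIso r := by
    apply isIso_of_retraction r (s ≫ inv (r ≫ s))
    rw [← Category.assoc, IsIso.hom_inv_id]
  exact ⟨hr, IsIso.of_isIso_comp_left r s⟩
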